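/- Let (Ω, ℙ) be a probability space, 𝒳 a measurable space, X : Ω → 𝒳, and Y*, M : Ω → {0,1} random variables such that M is independent of the pair (X, Y*), ℙ(M = 1) = p ∈ (0,1], and Y := M · Y*. Let k ∈ ℕ and f* : {0,1} × 𝒳 → ℝ^k be measurable with f*(Y*, X) and (PS_p f*)(Y, X) integrable. Then 𝔼[f*(Y*, X)] = 𝔼[(PS_p f*)(Y, X)]. -/

import Mathlib

open MeasureTheory ProbabilityTheory

/-- Propensity-scoring operator for (possibly vector-valued) losses on binary labels:
`(PS p f)(y, z) = (y/p) • (f 1 z + (p-1) • f 0 z) + (1-y) • f 0 z`. -/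
noncomputable def PS {𝒳 V : Type*} [AddCommGroup V] [Module ℝ V]
    (p : ℝ) (f : ℝ → 𝒳 → V) : ℝ → 𝒳 → V :=
  fun y z => (y / p) • (f 1 z + (p - 1) • f 0 z) + (1 - y) • f 0 z

/-- **Unbiased estimates with missing binary labels.**
Under the binary masking model (`M` independent of `(X, Y*)`, `P(M = 1) = p ∈ (0,1]`,
`Y := M · Y*`), for any measurable `f* : {0,1} × 𝒳 → ℝ^k` with the relevant compositions
integrable, `𝔼[f*(Y*, X)] = 𝔼[(PS_p f*)(Y, X)]`. -/
theorem unbiased_binary_estimate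
    {Ω : Type*} [MeasurableSpace Ω] (P : Measure Ω) [IsProbabilityMeasure P]
    {𝒳 : Type*} [MeasurableSpace 𝒳]
    (X : Ω → 𝒳) (Ystar M : Ω → ℝ)
    (hX : Measurable X) (hYstar : Measurable Ystar) (hM : Measurable M)
    (hYstar01 : ∀ ω, Ystar ω = 0 ∨ Ystar ω = 1)
    (hM01 : ∀ ω, M ω = 0 ∨ M ω = 1)
    (p : ℝ) (hp : p ∈ Set.Ioc (0 : ℝ) 1)
    (hindep : IndepFun (fun ω => (X ω, Ystar ω)) M P)
    (hMp : P {ω | M ω = 1} = ENNReal.ofReal p)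
    (k : ℕ) (f : ℝ → 𝒳 → EuclideanSpace ℝ (Fin k))
    (hf : Measurable (Function.uncurry f))
    (hint_true : Integrable (fun ω => f (Ystar ω) (X ω)) P)
    (hint_obs : Integrable (fun ω => PS p f (M ω * Ystar ω) (X ω)) P) :
    ∫ ω, f (Ystar ω) (X ω) ∂P = ∫ ω, PS p f (M ω * Ystar ω) (X ω) ∂P := by
  obtain ⟨hp0, hp1⟩ := hp
  have hp0' : p ≠ 0 := ne_of_gt hp0
  set D : Ω → EuclideanSpace ℝ (Fin k) := fun ω => f 1 (X ω) - f 0 (X ω) with hDdef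
  set g : Ω → EuclideanSpace ℝ (Fin k) :=
    fun ω => (M ω * Ystar ω / p - Ystar ω) • D ω with hgdef
  have key : ∀ ω, PS p f (M ω * Ystar ω) (X ω) = f (Ystar ω) (X ω) + g ω := by
    intro ω
    rcases hYstar01 ω with h1 | h1 <;> rcases hM01 ω with h2 | h2 <;>
      simp only [hgdef, hDdef, PS, h1, h2, mul_zero, mul_one, zero_mul, one_mul] <;>
      · match_scalars <;> field_simp <;> ring
  have hg_int : Integrable g P := by
    refine (hint_obs.sub hint_true).congr (Filter.Eventually.of_forall fun ω => ?_)
    rw [Pi.sub_apply, key ω]; abel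
  -- auxiliary function h = Ystar • D
  set h : Ω → EuclideanSpace ℝ (Fin k) := fun ω => Ystar ω • D ω with hhdef
  have hgzero : ∫ ω, g ω ∂P = 0 := by
    rcases eq_or_lt_of_le hp1 with hpe | hplt
    · -- p = 1 : M = 1 a.e., so g = 0 a.e.
      have hs1 : MeasurableSet {ω | M ω = 1} := hM (measurableSet_singleton 1)
      have hMc : P {ω | M ω = 1}ᶜ = 0 := by
        rw [prob_compl_eq_zero_iff hs1, hMp, hpe]; simp
      have hae : ∀ᵐ ω ∂P, M ω = 1 := by
        rw [ae_iff]
        simpa [Set.compl_setOf] using hMc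
      have hgz : g =ᵐ[P] 0 := by
        filter_upwards [hae] with ω hω
        simp only [hgdef, hω, hpe, one_mul, div_one, sub_self, zero_smul, Pi.zero_apply]
      rw [integral_congr_ae hgz]; simp
    · -- p < 1
      have hone : (1:ℝ) - p ≠ 0 := by linarith
      -- integrability of M • g and (1-M) • g via indicators
      have hMg : Integrable (fun ω => M ω • g ω) P := by
        have e : (fun ω => M ω • g ω) = {ω | M ω = 1}.indicator g := by
          funext ω
          rcases hM01 ω with h2 | h2 <;> simp [Set.indicator, h2]
        rw [e]; exact hg_int.indicator (hM (measurableSet_singleton 1))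
      have hM'g : Integrable (fun ω => (1 - M ω) • g ω) P := by
        have e : (fun ω => (1 - M ω) • g ω) = {ω | M ω = 0}.indicator g := by
          funext ω
          rcases hM01 ω with h2 | h2 <;> simp [Set.indicator, h2]
        rw [e]; exact hg_int.indicator (hM (measurableSet_singleton 0))
      -- pointwise identities
      have hMh_eq : (fun ω => M ω • h ω) = fun ω => (p / (1 - p)) • (M ω • g ω) := by
        funext ω
        rcases hM01 ω with h2 | h2 <;> rcases hYstar01 ω with h1 | h1 <;>
          simp only [hhdef, hgdef, h1, h2, mul_zero, mul_one, zero_mul, one_mul] <;>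
          match_scalars <;> field_simp <;> ring
      have hh_eq : h = fun ω => (p / (1 - p)) • (M ω • g ω) - (1 - M ω) • g ω := by
        funext ω
        rcases hM01 ω with h2 | h2 <;> rcases hYstar01 ω with h1 | h1 <;>
          simp only [hhdef, hgdef, h1, h2, mul_zero, mul_one, zero_mul, one_mul] <;>
          match_scalars <;> field_simp <;> ring
      have hMh_int : Integrable (fun ω => M ω • h ω) P := by
        rw [hMh_eq]; exact hMg.smul (p / (1 - p))
      have hh_int : Integrable h P := by
        rw [hh_eq]; exact (hMg.smul (p / (1 - p))).sub hM'g
      -- E[M] = p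
      have hEM : ∫ ω, M ω ∂P = p := by
        have e : M = {ω | M ω = 1}.indicator (fun _ => (1:ℝ)) := by
          funext ω
          rcases hM01 ω with h2 | h2 <;> simp [Set.indicator, h2]
        have hs1 : MeasurableSet {ω | M ω = 1} := hM (measurableSet_singleton 1)
        rw [e, integral_indicator hs1]
        simp [measureReal_def, hMp, ENNReal.toReal_ofReal hp0.le]
      -- key independence step: ∫ M • h = p • ∫ h
      have hDi : ∀ c : ℝ, Measurable fun x : 𝒳 => f c x := fun c =>
        hf.comp (measurable_const.prodMk measurable_id)
      have key2 : ∫ ω, M ω • h ω ∂P = p • ∫ ω, h ω ∂P := by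
        refine PiLp.ext fun i => ?_
        have proj := fun (F : Ω → EuclideanSpace ℝ (Fin k)) (hF : Integrable F P) =>
          ((EuclideanSpace.proj i : EuclideanSpace ℝ (Fin k) →L[ℝ] ℝ).integral_comp_comm hF).symm
        have e1 : (∫ ω, M ω • h ω ∂P) i = ∫ ω, M ω * h ω i ∂P := by
          simpa [PiLp.proj_apply, PiLp.smul_apply, smul_eq_mul] using proj _ hMh_int
        have e2 : (∫ ω, h ω ∂P) i = ∫ ω, h ω i ∂P := by
          simpa [PiLp.proj_apply] using proj _ hh_int
        have hφ : Measurable fun q : 𝒳 × ℝ => q.2 * (f 1 q.1 i - f 0 q.1 i) := by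
          apply Measurable.mul measurable_snd
          exact (((EuclideanSpace.proj i : EuclideanSpace ℝ (Fin k) →L[ℝ] ℝ).continuous.measurable).comp ((hDi 1).comp measurable_fst)).sub
            (((EuclideanSpace.proj i : EuclideanSpace ℝ (Fin k) →L[ℝ] ℝ).continuous.measurable).comp ((hDi 0).comp measurable_fst))
        have hIF : IndepFun (fun ω => h ω i) M P := by
          have := hindep.comp hφ measurable_id
          exact this
        have hmul := hIF.integral_mul_eq_mul_integral
          (((hφ.comp (hX.prodMk hYstar)).aestronglyMeasurable)) hM.aestronglyMeasurable
        have e3 : ∫ ω, M ω * h ω i ∂P = (∫ ω, h ω i ∂P) * p := by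
          have : (fun ω => M ω * h ω i) = fun ω => h ω i * M ω := by
            funext ω; ring
          rw [this]
          simpa [hEM] using hmul
        rw [e1, e3, PiLp.smul_apply, smul_eq_mul, e2]; exact mul_comm _ _
      calc ∫ ω, g ω ∂P = ∫ ω, ((1 / p) • (M ω • h ω) - h ω) ∂P := by
            congr 1; funext ω
            simp only [hgdef, hhdef]
            match_scalars <;> field_simp <;> ring
        _ = (1 / p) • ∫ ω, M ω • h ω ∂P - ∫ ω, h ω ∂P := by
            have h1 : Integrable (fun ω => (1 / p) • (M ω • h ω)) P := hMh_int.smul (1 / p)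
            rw [integral_sub h1 hh_int, integral_smul]
        _ = 0 := by
            rw [key2, smul_smul, one_div, inv_mul_cancel₀ hp0', one_smul, sub_self]
  rw [show (fun ω => PS p f (M ω * Ystar ω) (X ω)) = fun ω => f (Ystar ω) (X ω) + g ω
      from funext key]
  rw [integral_add hint_true hg_int, hgzero, add_zero]
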